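/- Let (f_k)_{k=0}^{n-1} be independent nonnegative random variables on (0,1) with disjoint sum f = ⊕_{k=0}^{n-1} f_k, assume μ(f) has no intervals of constancy, and set g_k = f_k · 1_{{f_k > μ(1,f)}}, g = ⊕ g_k. Then μ(max_{0≤k<n} g_k)(t) ≥ μ(g)(2t) for all t, and consequently μ(g) = μ(f)·χ_{(0,1)}. -/

import Mathlib

open MeasureTheory ProbabilityTheory Filter Topology
open scoped ENNReal

/-- Lebesgue measure on `(0,1)`. -/
noncomputable def P : Measure ℝ := volume.restrict (Set.Ioo 0 1)

/-- Decreasing rearrangement associated to a distribution function `D`: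
`s ↦ inf {λ ≥ 0 : D(λ) ≤ s}`. -/
noncomputable def rearr (D : ℝ → ℝ≥0∞) (s : ℝ) : ℝ :=
  sInf {l : ℝ | 0 ≤ l ∧ D l ≤ ENNReal.ofReal s}

private lemma prod_one_sub_le {ι : Type*} (s : Finset ι) (a : ι → ℝ)
    (h0 : ∀ i ∈ s, 0 ≤ a i) (hsum : ∑ i ∈ s, a i ≤ 1) :
    ∏ i ∈ s, (1 - a i) ≤ 1 - (∑ i ∈ s, a i) / 2 := by
  induction s using Finset.cons_induction with
  | empty => simp
  | cons j s hj ih =>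
    rw [Finset.prod_cons, Finset.sum_cons]
    rw [Finset.sum_cons] at hsum
    have hS0 : 0 ≤ ∑ i ∈ s, a i :=
      Finset.sum_nonneg fun i hi => h0 i (Finset.mem_cons_of_mem hi)
    have hj0 : 0 ≤ a j := h0 j (Finset.mem_cons_self j s)
    have hih := ih (fun i hi => h0 i (Finset.mem_cons_of_mem hi)) (by linarith)
    have hj1 : (0:ℝ) ≤ 1 - a j := by linarith
    nlinarith [mul_le_mul_of_nonneg_left hih hj1,
      mul_nonneg hj0 (by linarith : (0:ℝ) ≤ 1 - ∑ i ∈ s, a i)]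

/-- for independent nonnegative `f_0,…,f_{n-1}` on `(0,1)` with
disjoint sum `f` (distribution `λ ↦ ∑_k m{f_k > λ}`, rearrangement `μ(·,f)`
without intervals of constancy), setting `g_k = f_k · 1_{f_k > μ(1,f)}` with
disjoint sum `g`, one has `μ(t, max_k g_k) ≥ μ(2t, g)` for all `t > 0`, and
`μ(g) = μ(f) χ_{(0,1)}`. -/
theorem stmt_11 (n : ℕ) (hn : 0 < n) (f : Fin n → ℝ → ℝ)
    (hmeas : ∀ k, Measurable (f k)) (hpos : ∀ k t, 0 ≤ f k t)
    (hindep : iIndepFun (m := fun _ => Real.measurableSpace) f P)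
    (muF : ℝ → ℝ) (hmuF : muF = rearr (fun l => ∑ k, P {t | l < f k t}))
    (hstrict : ∀ s₁ s₂ : ℝ, 0 < s₁ → s₁ < s₂ → 0 < muF s₂ → muF s₂ < muF s₁)
    (g : Fin n → ℝ → ℝ)
    (hg : ∀ k t, g k t = if muF 1 < f k t then f k t else 0)
    (muG : ℝ → ℝ) (hmuG : muG = rearr (fun l => ∑ k, P {t | l < g k t})) :
    (∀ t : ℝ, 0 < t →
      muG (2 * t) ≤ rearr (fun l => P {x | l < ⨆ k, g k x}) t) ∧
    (∀ t : ℝ, 0 < t → t < 1 → muG t = muF t) ∧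
    (∀ t : ℝ, 1 ≤ t → muG t = 0) := by
  subst hmuF hmuG
  haveI : IsProbabilityMeasure P := ⟨by simp [P, Real.volume_Ioo]⟩
  haveI : Nonempty (Fin n) := ⟨⟨0, hn⟩⟩
  set DF : ℝ → ℝ≥0∞ := fun l => ∑ k, P {t | l < f k t} with hDFdef
  set DG : ℝ → ℝ≥0∞ := fun l => ∑ k, P {t | l < g k t} with hDGdef
  have hDFanti : ∀ {l l' : ℝ}, l ≤ l' → DF l' ≤ DF l := by
    intro l l' h
    exact Finset.sum_le_sum fun k _ => measure_mono fun t ht => lt_of_le_of_lt h ht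
  -- DF tends to 0 at infinity
  have hDFtend : Tendsto (fun j : ℕ => DF j) atTop (𝓝 0) := by
    have h : Tendsto (fun j : ℕ => ∑ k : Fin n, P {t | (j:ℝ) < f k t}) atTop
        (𝓝 (∑ _k : Fin n, (0:ℝ≥0∞))) := by
      refine tendsto_finset_sum _ fun k _ => ?_
      have hset : (⋂ j : ℕ, {t : ℝ | (j:ℝ) < f k t}) = ∅ := by
        ext t
        simp only [Set.mem_iInter, Set.mem_setOf_eq, Set.mem_empty_iff_false, iff_false, not_forall]
        obtain ⟨j, hj⟩ := exists_nat_gt (f k t)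
        exact ⟨j, not_lt.2 hj.le⟩
      have := tendsto_measure_iInter_atTop (μ := P) (s := fun j : ℕ => {t : ℝ | (j:ℝ) < f k t})
        (fun j => (measurableSet_lt measurable_const (hmeas k)).nullMeasurableSet)
        (fun i j hij t ht => show (i:ℝ) < f k t from lt_of_le_of_lt (Nat.cast_le.2 hij) ht)
        ⟨0, measure_ne_top P _⟩
      rw [hset] at this
      simpa [Function.comp_def] using this
    simpa using h
  have hDFsmall : ∀ u : ℝ≥0∞, 0 < u → ∃ l : ℝ, 0 ≤ l ∧ DF l ≤ u := by
    intro u hu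
    obtain ⟨j, hj⟩ := (hDFtend.eventually (Iic_mem_nhds hu)).exists
    exact ⟨j, Nat.cast_nonneg j, hj⟩
  -- the set defining muF 1
  have hA1ne : {l : ℝ | 0 ≤ l ∧ DF l ≤ ENNReal.ofReal 1}.Nonempty := by
    obtain ⟨l, hl0, hl⟩ := hDFsmall 1 zero_lt_one
    exact ⟨l, hl0, by rwa [ENNReal.ofReal_one]⟩
  set m := rearr DF 1 with hm
  have hmdef : m = sInf {l : ℝ | 0 ≤ l ∧ DF l ≤ ENNReal.ofReal 1} := rfl
  have hm0 : 0 ≤ m := by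
    rw [hmdef]; exact le_csInf hA1ne fun x hx => hx.1
  -- right continuity : DF m ≤ 1
  have hDFm : DF m ≤ 1 := by
    have hseq : ∀ k : Fin n, Tendsto (fun j : ℕ => P {t | m + ((j:ℝ)+1)⁻¹ < f k t}) atTop
        (𝓝 (P {t | m < f k t})) := by
      intro k
      have hsUnion : (⋃ j : ℕ, {t : ℝ | m + ((j:ℝ)+1)⁻¹ < f k t}) = {t | m < f k t} := by
        ext t
        simp only [Set.mem_iUnion, Set.mem_setOf_eq]
        constructor
        · rintro ⟨j, hj⟩
          have : (0:ℝ) < ((j:ℝ)+1)⁻¹ := by positivity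
          linarith
        · intro h
          obtain ⟨j, hj⟩ := exists_nat_one_div_lt (sub_pos.2 h)
          rw [one_div] at hj
          exact ⟨j, by linarith⟩
      have hmono : Monotone (fun j : ℕ => {t : ℝ | m + ((j:ℝ)+1)⁻¹ < f k t}) := by
        intro i j hij t ht
        simp only [Set.mem_setOf_eq] at ht ⊢
        have h1 : ((j:ℝ)+1)⁻¹ ≤ ((i:ℝ)+1)⁻¹ := by
          apply inv_anti₀ (by positivity)
          have : (i:ℝ) ≤ (j:ℝ) := Nat.cast_le.2 hij
          linarith
        linarith
      have := tendsto_measure_iUnion_atTop (μ := P) hmono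
      rw [hsUnion] at this
      exact this
    have htendm : Tendsto (fun j : ℕ => DF (m + ((j:ℝ)+1)⁻¹)) atTop (𝓝 (DF m)) :=
      tendsto_finset_sum _ fun k _ => hseq k
    refine le_of_tendsto htendm (Eventually.of_forall fun j => ?_)
    have hlt : m < m + ((j:ℝ)+1)⁻¹ := by
      have : (0:ℝ) < ((j:ℝ)+1)⁻¹ := by positivity
      linarith
    rw [hmdef] at hlt
    obtain ⟨a, haA, halt⟩ := exists_lt_of_csInf_lt hA1ne hlt
    calc DF (m + ((j:ℝ)+1)⁻¹) ≤ DF a := hDFanti halt.le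
      _ ≤ 1 := by rw [← ENNReal.ofReal_one]; exact haA.2
  -- relation between DG and DF
  have hGset : ∀ l : ℝ, 0 ≤ l → ∀ k, {t : ℝ | l < g k t} = {t | max l m < f k t} := by
    intro l hl k
    ext t
    simp only [Set.mem_setOf_eq, hg k t, max_lt_iff]
    by_cases h : m < f k t
    · simp [h]
    · rw [if_neg h]
      constructor
      · intro h2; linarith
      · rintro ⟨-, h2⟩; exact absurd h2 h
  have hDGeq : ∀ l : ℝ, 0 ≤ l → DG l = DF (max l m) := by
    intro l hl
    rw [hDGdef, hDFdef]
    exact Finset.sum_congr rfl fun k _ => by rw [hGset l hl k]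
  have hDG1 : ∀ l : ℝ, 0 ≤ l → DG l ≤ 1 := fun l hl => by
    rw [hDGeq l hl]; exact le_trans (hDFanti (le_max_right l m)) hDFm
  -- measurability of g
  have hgm : ∀ k, Measurable (g k) := by
    intro k
    have hgeq : g k = fun t => if m < f k t then f k t else 0 := funext (hg k)
    rw [hgeq]
    exact Measurable.ite (measurableSet_lt measurable_const (hmeas k)) (hmeas k) measurable_const
  -- PART 3
  have part3 : ∀ t : ℝ, 1 ≤ t → rearr DG t = 0 := by
    intro t ht
    have h0mem : (0:ℝ) ∈ {l : ℝ | 0 ≤ l ∧ DG l ≤ ENNReal.ofReal t} :=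
      ⟨le_refl 0, le_trans (hDG1 0 le_rfl)
        (by rw [← ENNReal.ofReal_one]; exact ENNReal.ofReal_le_ofReal ht)⟩
    exact le_antisymm (csInf_le ⟨0, fun x hx => hx.1⟩ h0mem)
      (le_csInf ⟨0, h0mem⟩ fun x hx => hx.1)
  -- PART 2
  have part2 : ∀ t : ℝ, 0 < t → t < 1 → rearr DG t = rearr DF t := by
    intro t ht ht1
    have hseteq : {l : ℝ | 0 ≤ l ∧ DG l ≤ ENNReal.ofReal t}
        = {l : ℝ | 0 ≤ l ∧ DF l ≤ ENNReal.ofReal t} := by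
      ext l
      simp only [Set.mem_setOf_eq]
      constructor
      · rintro ⟨hl0, hl⟩
        refine ⟨hl0, ?_⟩
        rcases le_or_gt m l with hml | hlm
        · rwa [hDGeq l hl0, max_eq_left hml] at hl
        · exfalso
          have hm_pos : 0 < m := lt_of_le_of_lt hl0 hlm
          have hDFmt : DF m ≤ ENNReal.ofReal t := by
            rwa [hDGeq l hl0, max_eq_right hlm.le] at hl
          have h1 : rearr DF t ≤ m := csInf_le ⟨0, fun x hx => hx.1⟩ ⟨hm0, hDFmt⟩
          have h3 : rearr DF 1 < rearr DF t := hstrict t 1 ht ht1 (by rw [← hm]; exact hm_pos)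
          rw [← hm] at h3
          linarith
      · rintro ⟨hl0, hl⟩
        exact ⟨hl0, by rw [hDGeq l hl0]; exact le_trans (hDFanti (le_max_left l m)) hl⟩
    unfold rearr
    rw [hseteq]
  -- PART 1
  have part1 : ∀ t : ℝ, 0 < t →
      rearr DG (2 * t) ≤ rearr (fun l => P {x | l < ⨆ k, g k x}) t := by
    intro t ht
    -- independence of the g's
    have hφ : Measurable (fun x : ℝ => if m < x then x else 0) :=
      Measurable.ite (measurableSet_lt measurable_const measurable_id) measurable_id
        measurable_const
    have hgeq : g = fun k => (fun x : ℝ => if m < x then x else 0) ∘ f k := by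
      funext k t'
      simp [hg k t', Function.comp]
    have hgind : iIndepFun (m := fun _ => Real.measurableSpace) g P := by
      rw [hgeq]
      exact hindep.comp _ (fun _ => hφ)
    have hUnion : ∀ l : ℝ, {x : ℝ | l < ⨆ k, g k x} = ⋃ k, {x | l < g k x} := by
      intro l
      ext x
      simp only [Set.mem_setOf_eq, Set.mem_iUnion]
      exact lt_ciSup_iff (Set.Finite.bddAbove (Set.finite_range _))
    -- nonemptiness witness
    obtain ⟨l₀, hl₀0, hl₀⟩ := hDFsmall (ENNReal.ofReal t) (ENNReal.ofReal_pos.2 ht)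
    have hl₀mem : max l₀ m ∈ {l : ℝ | 0 ≤ l ∧ P {x | l < ⨆ k, g k x} ≤ ENNReal.ofReal t} := by
      refine ⟨le_trans hl₀0 (le_max_left _ _), ?_⟩
      rw [hUnion]
      calc P (⋃ k, {x | max l₀ m < g k x}) ≤ ∑ k, P {x | max l₀ m < g k x} :=
            measure_iUnion_fintype_le P _
        _ = DG (max l₀ m) := by rw [hDGdef]
        _ = DF (max (max l₀ m) m) := hDGeq _ (le_trans hl₀0 (le_max_left _ _))
        _ = DF (max l₀ m) := by rw [max_assoc, max_self]
        _ ≤ DF l₀ := hDFanti (le_max_left _ _)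
        _ ≤ ENNReal.ofReal t := hl₀
    -- the key inequality
    have hkey : ∀ l : ℝ, 0 ≤ l → P {x | l < ⨆ k, g k x} ≤ ENNReal.ofReal t →
        DG l ≤ ENNReal.ofReal (2 * t) := by
      intro l hl hPle
      set A : Fin n → Set ℝ := fun k => {x | l < g k x} with hA
      have hAm : ∀ k, MeasurableSet (A k) := fun k => measurableSet_lt measurable_const (hgm k)
      have hcompl : ∀ k, (A k)ᶜ = g k ⁻¹' Set.Iic l := by
        intro k; ext x; simp [hA, not_lt]
      have hInd : P (⋂ k, (A k)ᶜ) = ∏ k, P ((A k)ᶜ) := by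
        refine hgind.meas_iInter fun k => ?_
        exact ⟨Set.Iic l, measurableSet_Iic, (hcompl k).symm⟩
      have hPU : P {x | l < ⨆ k, g k x} = 1 - ∏ k, (1 - P (A k)) := by
        rw [hUnion l]
        have h1 : P (⋃ k, A k) = 1 - P ((⋃ k, A k)ᶜ) := by
          rw [prob_compl_eq_one_sub (MeasurableSet.iUnion hAm),
            ENNReal.sub_sub_cancel ENNReal.one_ne_top prob_le_one]
        rw [h1, Set.compl_iUnion, hInd]
        congr 1
        exact Finset.prod_congr rfl fun k _ => prob_compl_eq_one_sub (hAm k)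
      set b : Fin n → ℝ := fun k => (P (A k)).toReal with hb
      have hb0 : ∀ k, 0 ≤ b k := fun k => ENNReal.toReal_nonneg
      have hak1 : ∀ k : Fin n, P (A k) ≤ 1 := fun k => prob_le_one
      have hsumA : ∑ k, P (A k) ≤ 1 := hDG1 l hl
      have hsum_toReal : (∑ k, P (A k)).toReal = ∑ k, b k :=
        ENNReal.toReal_sum fun k _ => measure_ne_top P _
      have hsumb : ∑ k, b k ≤ 1 := by
        rw [← hsum_toReal]
        have := ENNReal.toReal_mono ENNReal.one_ne_top hsumA
        simpa using this
      have hprod : (∏ k, (1 - P (A k))).toReal = ∏ k, (1 - b k) := by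
        rw [ENNReal.toReal_prod]
        exact Finset.prod_congr rfl fun k _ => by
          rw [ENNReal.toReal_sub_of_le (hak1 k) ENNReal.one_ne_top, ENNReal.toReal_one]
      have hprodle : (∏ k, (1 - P (A k))) ≤ 1 :=
        Finset.prod_le_one (fun _ _ => zero_le) (fun k _ => tsub_le_self)
      have hPUreal : (P {x | l < ⨆ k, g k x}).toReal = 1 - ∏ k, (1 - b k) := by
        rw [hPU, ENNReal.toReal_sub_of_le hprodle ENNReal.one_ne_top, ENNReal.toReal_one, hprod]
      have hPUt : (P {x | l < ⨆ k, g k x}).toReal ≤ t :=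
        ENNReal.toReal_le_of_le_ofReal ht.le hPle
      have hlem := prod_one_sub_le Finset.univ b (fun k _ => hb0 k) hsumb
      have hmain : ∑ k, b k ≤ 2 * t := by
        rw [hPUreal] at hPUt
        linarith
      have hDGA : DG l = ∑ k, P (A k) := rfl
      rw [hDGA, ← ENNReal.ofReal_toReal (lt_of_le_of_lt hsumA ENNReal.one_lt_top).ne, hsum_toReal]
      exact ENNReal.ofReal_le_ofReal hmain
    unfold rearr
    refine csInf_le_csInf ⟨0, fun x hx => hx.1⟩ ⟨max l₀ m, hl₀mem⟩ ?_
    intro x hx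
    exact ⟨hx.1, hkey x hx.1 hx.2⟩
  exact ⟨part1, part2, part3⟩
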